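/- For every positive integer t there is some n₀ such that for all integers n ≥ n₀ there exists a function f from the t-element subsets of [n] = {1,…,n} to subsets of [n] with the following two properties: (i) for every pair of t-element subsets A, B of [n], at least one of A ∩ f(B) and B ∩ f(A) is empty; and (ii) for every collection (A_i)_{i ∈ I} of at most (log n)/(2t) t-element subsets of [n], the intersection ⋂_{i∈I} f(A_i) is nonempty. -/

import Mathlib

open Finset

/-- The "domination" relation built from a boolean matrix `D`:
`x` is dominated by `a`. It is asymmetric for every `D`. -/
abbrev Tarr {n : ℕ} (D : Fin n → Fin n → Bool) (a x : Fin n) : Prop :=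
  D a x = false ∧ D x a = true

lemma bad_card (n s : ℕ) (U : Finset (Fin n)) (hU : U.card = s) :
    (Finset.univ.filter (fun D : Fin n → Fin n → Bool =>
        ¬ ∃ x, ∀ a ∈ U, Tarr D a x)).card
      ≤ (2 ^ (2 * s) - 1) ^ (n - s) * 2 ^ (n * n - 2 * s * (n - s)) := by
  classical
  set ι : (↥(Uᶜ)) × (↥U × Bool) → Fin n × Fin n :=
    fun q => if q.2.2 then (q.1.1, q.2.1.1) else (q.2.1.1, q.1.1) with hι
  have hinj : Function.Injective ι := by
    rintro ⟨x, a, b⟩ ⟨x', a', b'⟩ h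
    have hx : x.1 ∉ U := Finset.mem_compl.mp x.2
    have hx' : x'.1 ∉ U := Finset.mem_compl.mp x'.2
    cases b <;> cases b' <;>
      simp only [hι, if_true, if_false, Bool.false_eq_true, ite_true, ite_false,
        Prod.mk.injEq] at h
    · exact Prod.ext (Subtype.ext h.2) (Prod.ext (Subtype.ext h.1) rfl)
    · exact absurd (by rw [h.2]; exact a'.2) hx
    · exact absurd (by rw [h.1]; exact a'.2) hx
    · exact Prod.ext (Subtype.ext h.1) (Prod.ext (Subtype.ext h.2) rfl)
  set g₀ : ↥U × Bool → Bool := fun q => q.2 with hg₀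
  set E : (Fin n → Fin n → Bool) → ↥(Uᶜ) → (↥U × Bool → Bool) :=
    fun D x q => D (ι (x, q)).1 (ι (x, q)).2 with hE
  set R : (Fin n → Fin n → Bool) → ({p : Fin n × Fin n // p ∉ Set.range ι} → Bool) :=
    fun D p => D p.1.1 p.1.2 with hR
  have hmaps : ∀ D : Fin n → Fin n → Bool, (¬ ∃ x, ∀ a ∈ U, Tarr D a x) →
      ∀ x, E D x ≠ g₀ := by
    intro D hD x hx
    apply hD
    refine ⟨x.1, fun a ha => ?_⟩
    constructor
    · have h1 := congrFun hx (⟨a, ha⟩, false)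
      simpa [hE, hι, hg₀] using h1
    · have h1 := congrFun hx (⟨a, ha⟩, true)
      simpa [hE, hι, hg₀] using h1
  have hERinj : Function.Injective (fun D : Fin n → Fin n → Bool => (E D, R D)) := by
    intro D D' h
    rw [Prod.mk.injEq] at h
    funext p₁ p₂
    by_cases hp : (p₁, p₂) ∈ Set.range ι
    · obtain ⟨⟨x, q⟩, hq⟩ := hp
      have h1 := congrFun (congrFun h.1 x) q
      simp only [hE] at h1
      rw [hq] at h1
      exact h1
    · exact congrFun h.2 ⟨(p₁, p₂), hp⟩
  have hcardle : (Finset.univ.filter (fun D : Fin n → Fin n → Bool =>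
        ¬ ∃ x, ∀ a ∈ U, Tarr D a x)).card
      ≤ ((Finset.univ.filter (fun h : ↥(Uᶜ) → ↥U × Bool → Bool => ∀ x, h x ≠ g₀)) ×ˢ
          (Finset.univ : Finset ({p : Fin n × Fin n // p ∉ Set.range ι} → Bool))).card := by
    apply Finset.card_le_card_of_injOn (fun D => (E D, R D))
    · intro D hD
      simp only [Finset.mem_coe, Finset.mem_filter, Finset.mem_univ, true_and] at hD
      simp only [Finset.mem_coe, Finset.mem_product, Finset.mem_filter, Finset.mem_univ, true_and]
      exact ⟨hmaps D hD, trivial⟩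
    · exact fun a _ b _ h => hERinj h
  rw [Finset.card_product] at hcardle
  have hcardUc : Fintype.card ↥(Uᶜ) = n - s := by
    simp [Finset.card_compl, hU]
  have hcardUB : Fintype.card (↥U × Bool) = 2 * s := by
    simp [hU, mul_comm]
  have c1 : (Finset.univ.filter
      (fun h : ↥(Uᶜ) → ↥U × Bool → Bool => ∀ x, h x ≠ g₀)).card
      = (2 ^ (2 * s) - 1) ^ (n - s) := by
    rw [← Fintype.card_subtype]
    rw [Fintype.card_congr (Equiv.subtypePiEquivPi (p := fun _ g => g ≠ g₀))]
    rw [Fintype.card_pi]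
    have cg : Fintype.card {g : ↥U × Bool → Bool // g ≠ g₀} = 2 ^ (2 * s) - 1 := by
      have h1 := Fintype.card_subtype_compl (fun g : ↥U × Bool → Bool => g = g₀)
      have h2 : Fintype.card {g : ↥U × Bool → Bool // g = g₀} = 1 :=
        Fintype.card_subtype_eq g₀
      rw [h2] at h1
      have h3 : Fintype.card (↥U × Bool → Bool) = 2 ^ (2 * s) := by
        rw [Fintype.card_fun, Fintype.card_bool, hcardUB]
      rw [h3] at h1
      exact h1
    simp only [cg]
    rw [Finset.prod_const, Finset.card_univ, hcardUc]
  have c2 : (Finset.univ :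
      Finset ({p : Fin n × Fin n // p ∉ Set.range ι} → Bool)).card
      = 2 ^ (n * n - 2 * s * (n - s)) := by
    rw [Finset.card_univ, Fintype.card_fun, Fintype.card_bool]
    congr 1
    have h1 := Fintype.card_subtype_compl (fun p : Fin n × Fin n => p ∈ Set.range ι)
    have h2 : Fintype.card {p : Fin n × Fin n // p ∈ Set.range ι}
        = (n - s) * (2 * s) := by
      rw [Fintype.card_congr (Equiv.ofInjective ι hinj).symm]
      rw [Fintype.card_prod, hcardUc, hcardUB]
    rw [h2] at h1
    rw [h1]
    congr 1
    · simp
    · ring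
  rw [c1, c2] at hcardle
  exact hcardle

lemma exists_good (n s : ℕ) (h2s : 2 * s * (n - s) ≤ n * n)
    (hmain : n.choose s * ((2 ^ (2 * s) - 1) ^ (n - s)) < 2 ^ (2 * s * (n - s))) :
    ∃ D : Fin n → Fin n → Bool, ∀ U : Finset (Fin n), U.card = s →
      ∃ x, ∀ a ∈ U, Tarr D a x := by
  classical
  by_contra hcon
  push_neg at hcon
  have hsub : (Finset.univ : Finset (Fin n → Fin n → Bool)) ⊆
      ((Finset.univ : Finset (Fin n)).powersetCard s).biUnion
        (fun U => Finset.univ.filter (fun D => ¬ ∃ x, ∀ a ∈ U, Tarr D a x)) := by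
    intro D _
    obtain ⟨U, hU1, hU2⟩ := hcon D
    refine Finset.mem_biUnion.mpr ⟨U, ?_, ?_⟩
    · simpa [Finset.mem_powersetCard_univ] using hU1
    · simp only [Finset.mem_filter, Finset.mem_univ, true_and]
      push_neg
      exact hU2
  have hcard := Finset.card_le_card hsub
  have hbound : (((Finset.univ : Finset (Fin n)).powersetCard s).biUnion
        (fun U => Finset.univ.filter (fun D : Fin n → Fin n → Bool =>
          ¬ ∃ x, ∀ a ∈ U, Tarr D a x))).card
      ≤ ∑ U ∈ (Finset.univ : Finset (Fin n)).powersetCard s,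
        (Finset.univ.filter (fun D : Fin n → Fin n → Bool =>
          ¬ ∃ x, ∀ a ∈ U, Tarr D a x)).card :=
    Finset.card_biUnion_le
  have hsum : ∑ U ∈ (Finset.univ : Finset (Fin n)).powersetCard s,
      (Finset.univ.filter (fun D : Fin n → Fin n → Bool =>
        ¬ ∃ x, ∀ a ∈ U, Tarr D a x)).card
      ≤ ((Finset.univ : Finset (Fin n)).powersetCard s).card *
        ((2 ^ (2 * s) - 1) ^ (n - s) * 2 ^ (n * n - 2 * s * (n - s))) := by
    rw [← smul_eq_mul]
    apply Finset.sum_le_card_nsmul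
    intro U hU
    exact bad_card n s U (by simpa [Finset.mem_powersetCard_univ] using hU)
  have htot : (Finset.univ : Finset (Fin n → Fin n → Bool)).card = 2 ^ (n * n) := by
    rw [Finset.card_univ, Fintype.card_fun, Fintype.card_fun, Fintype.card_bool,
      Fintype.card_fin, ← pow_mul]
  have hpows : ((Finset.univ : Finset (Fin n)).powersetCard s).card = n.choose s := by
    rw [Finset.card_powersetCard, Finset.card_univ, Fintype.card_fin]
  have hfinal : 2 ^ (n * n) < 2 ^ (n * n) := by
    calc 2 ^ (n * n) = (Finset.univ : Finset (Fin n → Fin n → Bool)).card := htot.symm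
      _ ≤ _ := hcard
      _ ≤ _ := hbound
      _ ≤ ((Finset.univ : Finset (Fin n)).powersetCard s).card *
          ((2 ^ (2 * s) - 1) ^ (n - s) * 2 ^ (n * n - 2 * s * (n - s))) := hsum
      _ = (n.choose s * (2 ^ (2 * s) - 1) ^ (n - s)) * 2 ^ (n * n - 2 * s * (n - s)) := by
          rw [hpows]; ring
      _ < 2 ^ (2 * s * (n - s)) * 2 ^ (n * n - 2 * s * (n - s)) := by
          apply Nat.mul_lt_mul_right (Nat.pow_pos (by norm_num)) |>.mpr hmain
      _ = 2 ^ (n * n) := by rw [← pow_add, Nat.add_sub_cancel' h2s]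
  exact absurd hfinal (lt_irrefl _)

set_option maxRecDepth 8000 in
set_option maxHeartbeats 1600000 in
lemma numeric (n : ℕ) (hn : 10 ^ 501 ≤ n) :
    Nat.floor (Real.log n / 2) ≤ n ∧
    2 * Nat.floor (Real.log n / 2) * (n - Nat.floor (Real.log n / 2)) ≤ n * n ∧
    n.choose (Nat.floor (Real.log n / 2)) *
        ((2 ^ (2 * Nat.floor (Real.log n / 2)) - 1) ^ (n - Nat.floor (Real.log n / 2)))
      < 2 ^ (2 * Nat.floor (Real.log n / 2) * (n - Nat.floor (Real.log n / 2))) := by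
  have hn1 : 1 ≤ n := le_trans (Nat.one_le_pow _ _ (by norm_num)) hn
  set s := Nat.floor (Real.log n / 2) with hsdef
  have hNpos : (0:ℝ) < (n:ℝ) := by exact_mod_cast hn1
  set L : ℝ := Real.log (n:ℝ) with hLdef
  have hlog10 : (2:ℝ) < Real.log 10 := by
    rw [Real.lt_log_iff_exp_lt (by norm_num : (0:ℝ) < 10)]
    have h1 : Real.exp 2 = Real.exp 1 * Real.exp 1 := by
      rw [← Real.exp_add]; norm_num
    have h2 := Real.exp_one_lt_d9
    nlinarith [Real.exp_pos 1]
  have hL : (1002:ℝ) ≤ L := by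
    have h10 : ((10:ℕ):ℝ) = (10:ℝ) := by norm_num
    have h1 : ((10:ℝ)) ^ 501 ≤ (n:ℝ) := by
      have h := (Nat.cast_le (α := ℝ)).mpr hn
      rwa [Nat.cast_pow, h10] at h
    have h2 : Real.log ((10:ℝ) ^ 501) ≤ L :=
      Real.log_le_log (by positivity) h1
    rw [Real.log_pow] at h2
    have h3 : ((501:ℕ):ℝ) = (501:ℝ) := by norm_num
    rw [h3] at h2
    nlinarith
  clear hn
  have hLpos : (0:ℝ) < L := by linarith
  have hs_le : (s : ℝ) ≤ L / 2 := by
    rw [hsdef, hLdef]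
    apply Nat.floor_le
    rw [← hLdef]
    positivity
  have hLN : L ≤ (n:ℝ) - 1 := Real.log_le_sub_one_of_pos hNpos
  have h2sN : 2 * (s:ℝ) ≤ (n:ℝ) := by linarith
  have hsn : s ≤ n := by
    have h : (s:ℝ) ≤ (n:ℝ) := by linarith
    exact_mod_cast h
  have h2sn : 2 * s ≤ n := by
    have h : ((2 * s : ℕ) : ℝ) ≤ (n:ℝ) := by push_cast; linarith
    exact_mod_cast h
  refine ⟨hsn, Nat.mul_le_mul h2sn (Nat.sub_le n s), ?_⟩
  set m : ℕ := n - s with hmdef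
  have hMcast : ((m : ℕ) : ℝ) = (n:ℝ) - s := by
    rw [hmdef]; push_cast [hsn]; ring
  have hM2 : (n:ℝ) / 2 ≤ (m:ℝ) := by rw [hMcast]; linarith
  have hMpos : (0:ℝ) < (m:ℝ) := by linarith
  have h4pos : (0:ℝ) < 4 ^ s := by positivity
  have h4s : (4:ℝ) ^ s ≤ Real.exp (L * Real.log 2) := by
    have h1 : (4:ℝ) ^ s = Real.exp (s * Real.log 4) := by
      rw [← Real.log_pow, Real.exp_log h4pos]
    rw [h1]
    apply Real.exp_le_exp.mpr
    have hlog4 : Real.log 4 = 2 * Real.log 2 := by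
      rw [show (4:ℝ) = 2 ^ 2 by norm_num, Real.log_pow]; push_cast; ring
    have hlog2pos : (0:ℝ) < Real.log 2 := Real.log_pos (by norm_num)
    rw [hlog4]
    nlinarith
  have hexp07 : Real.exp (L * Real.log 2) ≤ Real.exp (7/10 * L) := by
    apply Real.exp_le_exp.mpr
    have := Real.log_two_lt_d9
    nlinarith
  have hLsq : L ^ 2 < Real.exp (3/10 * L) := by
    have h1 : Real.exp (3/10 * L) = Real.exp (1/10 * L) ^ 3 := by
      rw [← Real.exp_nat_mul]
      congr 1
      push_cast
      ring
    have h2 : 1/10 * L + 1 ≤ Real.exp (1/10 * L) := Real.add_one_le_exp _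
    have h3 : (1/10 * L) ^ 3 ≤ Real.exp (1/10 * L) ^ 3 := by
      apply pow_le_pow_left₀ (by nlinarith) (by nlinarith)
    rw [h1]
    nlinarith
  have hNexp : (n:ℝ) = Real.exp L := (Real.exp_log hNpos).symm
  have hkey : (s:ℝ) * L * 4 ^ s < (m:ℝ) := by
    have h1 : (s:ℝ) * L * 4 ^ s ≤ (L / 2 * L) * Real.exp (7/10 * L) := by
      apply mul_le_mul
      · apply mul_le_mul_of_nonneg_right hs_le hLpos.le
      · exact le_trans h4s hexp07
      · positivity
      · nlinarith
    have h2 : (L / 2 * L) * Real.exp (7/10 * L) < (n:ℝ) / 2 := by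
      have h4 : Real.exp (3/10 * L) * Real.exp (7/10 * L) = Real.exp L := by
        rw [← Real.exp_add]
        congr 1
        ring
      have h3 : L ^ 2 * Real.exp (7/10 * L) < Real.exp L := by
        calc L ^ 2 * Real.exp (7/10 * L)
            < Real.exp (3/10 * L) * Real.exp (7/10 * L) :=
              mul_lt_mul_of_pos_right hLsq (Real.exp_pos _)
          _ = Real.exp L := h4
      rw [hNexp]
      nlinarith [Real.exp_pos (7/10 * L)]
    linarith
  set q : ℝ := ((4:ℝ) ^ s)⁻¹ with hqdef
  have hq0 : 0 < q := by positivity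
  have hq1 : q ≤ 1 := by
    rw [hqdef]
    exact inv_le_one_of_one_le₀ (one_le_pow₀ (by norm_num : (1:ℝ) ≤ 4))
  have hsLMq : (s:ℝ) * L < (m:ℝ) * q := by
    rw [hqdef, ← div_eq_mul_inv, lt_div_iff₀ h4pos]
    exact hkey
  rw [← Nat.cast_lt (α := ℝ)]
  have h2s4 : (2:ℝ) ^ (2 * s) = 4 ^ s := by
    rw [pow_mul]; norm_num
  have hfact : ((2:ℝ) ^ (2 * s) - 1) = 4 ^ s * (1 - q) := by
    rw [h2s4, hqdef]
    field_simp
  have hgoalR : (n.choose s : ℝ) * ((2:ℝ) ^ (2 * s) - 1) ^ m < (4:ℝ) ^ (s * m) := by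
    have hchoose : (n.choose s : ℝ) ≤ (n:ℝ) ^ s := by
      exact_mod_cast Nat.choose_le_pow n s
    have hsub : (1 - q) ^ m ≤ Real.exp (-((m:ℝ) * q)) := by
      have h1 : (1 - q) ≤ Real.exp (-q) := by
        have := Real.add_one_le_exp (-q)
        linarith
      have h2 : (1 - q) ^ m ≤ Real.exp (-q) ^ m :=
        pow_le_pow_left₀ (by linarith) h1 m
      have h3 : Real.exp (-q) ^ m = Real.exp (-((m:ℝ) * q)) := by
        rw [← Real.exp_nat_mul]
        congr 1
        ring
      rw [← h3]; exact h2
    have hNs : (n:ℝ) ^ s * Real.exp (-((m:ℝ) * q)) < 1 := by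
      have h1 : (n:ℝ) ^ s = Real.exp ((s:ℝ) * L) := by
        rw [hNexp, ← Real.exp_nat_mul]
      rw [h1, ← Real.exp_add]
      rw [show (1:ℝ) = Real.exp 0 by simp]
      apply Real.exp_lt_exp.mpr
      linarith
    calc (n.choose s : ℝ) * ((2:ℝ) ^ (2 * s) - 1) ^ m
        = (n.choose s : ℝ) * ((4:ℝ) ^ s) ^ m * (1 - q) ^ m := by
          rw [hfact, mul_pow]; ring
      _ ≤ (n:ℝ) ^ s * ((4:ℝ) ^ s) ^ m * Real.exp (-((m:ℝ) * q)) := by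
          apply mul_le_mul
          · apply mul_le_mul_of_nonneg_right hchoose (by positivity)
          · exact hsub
          · apply pow_nonneg; linarith
          · positivity
      _ = ((n:ℝ) ^ s * Real.exp (-((m:ℝ) * q))) * ((4:ℝ) ^ s) ^ m := by ring
      _ < 1 * ((4:ℝ) ^ s) ^ m := mul_lt_mul_of_pos_right hNs (by positivity)
      _ = (4:ℝ) ^ (s * m) := by rw [one_mul, ← pow_mul]
  have hc1 : ((n.choose s * ((2 ^ (2 * s) - 1) ^ m) : ℕ) : ℝ)
      = (n.choose s : ℝ) * ((2:ℝ) ^ (2 * s) - 1) ^ m := by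
    push_cast [Nat.one_le_two_pow]
    ring
  have hc2 : (((2:ℕ) ^ (2 * s * m) : ℕ) : ℝ) = (4:ℝ) ^ (s * m) := by
    push_cast
    rw [show (4:ℝ) = 2 ^ 2 by norm_num, ← pow_mul]
    ring_nf
  rw [hc1, hc2]
  exact hgoalR

/-- For every positive integer t there is some n₀ such that for every
n ≥ n₀ there is a function f from t-element subsets of [n] to subsets of [n] such
that: (i) for all t-element sets A, B, at least one of A ∩ f(B) and B ∩ f(A) is
empty, and (ii) any collection of at most (log n)/(2t) t-element sets A_i satisfies
⋂ f(A_i) ≠ ∅. (Here [n] is modelled as `Fin n`.) -/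
theorem stmt_6 (t : ℕ) (ht : 1 ≤ t) :
    ∃ n₀ : ℕ, ∀ n : ℕ, n₀ ≤ n →
      ∃ f : Finset (Fin n) → Finset (Fin n),
        (∀ A B : Finset (Fin n), A.card = t → B.card = t →
          A ∩ f B = ∅ ∨ B ∩ f A = ∅) ∧
        (∀ 𝒜 : Finset (Finset (Fin n)), (∀ A ∈ 𝒜, A.card = t) →
          (𝒜.card : ℝ) ≤ Real.log n / (2 * (t : ℝ)) →
          ∃ x : Fin n, ∀ A ∈ 𝒜, x ∈ f A) := by
  classical
  refine ⟨10 ^ 501, fun n hn => ?_⟩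
  obtain ⟨hsn, h2s, hmain⟩ := numeric n hn
  set s := Nat.floor (Real.log n / 2) with hs
  obtain ⟨D, hD⟩ := exists_good n s h2s hmain
  refine ⟨fun A => Finset.univ.filter (fun x => ∀ a ∈ A, Tarr D a x), ?_, ?_⟩
  · intro A B _ _
    by_contra hcontra
    push_neg at hcontra
    obtain ⟨h1, h2⟩ := hcontra
    obtain ⟨a, ha⟩ := h1
    obtain ⟨b, hb⟩ := h2
    simp only [Finset.mem_inter, Finset.mem_filter, Finset.mem_univ, true_and] at ha hb
    obtain ⟨hba1, hba2⟩ := ha.2 b hb.1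
    obtain ⟨hab1, hab2⟩ := hb.2 a ha.1
    rw [hab1] at hba2
    exact absurd hba2 (by simp)
  · intro 𝒜 hcards hsize
    set U := 𝒜.biUnion id with hUdef
    have hUcard : U.card ≤ t * 𝒜.card := by
      calc U.card ≤ ∑ A ∈ 𝒜, (id A).card := Finset.card_biUnion_le
        _ = ∑ A ∈ 𝒜, t := Finset.sum_congr rfl (fun A hA => hcards A hA)
        _ = 𝒜.card * t := by rw [Finset.sum_const, smul_eq_mul]
        _ = t * 𝒜.card := mul_comm _ _
    have ht' : (0:ℝ) < (t:ℝ) := by exact_mod_cast ht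
    have hUs : U.card ≤ s := by
      apply Nat.le_floor
      calc (U.card : ℝ) ≤ ((t * 𝒜.card : ℕ) : ℝ) := by exact_mod_cast hUcard
        _ = (t:ℝ) * (𝒜.card:ℝ) := by push_cast; ring
        _ ≤ (t:ℝ) * (Real.log n / (2 * (t:ℝ))) :=
            mul_le_mul_of_nonneg_left hsize ht'.le
        _ = Real.log n / 2 := by field_simp
    obtain ⟨W, hUW, hW⟩ := Finset.exists_superset_card_eq hUs
      (by simpa using hsn)
    obtain ⟨x, hx⟩ := hD W hW
    exact ⟨x, fun A hA => Finset.mem_filter.mpr ⟨Finset.mem_univ x, fun a haA =>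
      hx a (hUW (Finset.mem_biUnion.mpr ⟨A, hA, haA⟩))⟩⟩
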